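/- Let N ≥ 4 and let x ∈ ℝ^(N choose 2) be indexed by pairs i<j with entries λ_{ij}. Suppose that for every 4-element subset I = {i,j,k,l} of {1,…,N} the projection of x to the coordinates indexed by pairs in I lies in the subspace U_I = { (μ_a + μ_b)_{a<b ∈ I} : μ ∈ ℝ^I }. Then x lies in the subspace U_N = { (μ_i + μ_j)_{i<j} : μ ∈ ℝ^N }. -/

import Mathlib

/-- If a vector `x ∈ ℝ^(N choose 2)` (given by entries `x i j` for `i < j`) restricts,
on every 4-element subset `I` of the index set, to an element of
`U_I = {(μ_a + μ_b)_{a<b∈I}}`, then `x ∈ U_N = {(μ_i + μ_j)_{i<j}}`. -/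
theorem stmt0 (N : ℕ) (hN : 4 ≤ N) (x : Fin N → Fin N → ℝ)
    (h : ∀ I : Finset (Fin N), I.card = 4 →
      ∃ μ : Fin N → ℝ, ∀ a ∈ I, ∀ b ∈ I, a < b → x a b = μ a + μ b) :
    ∃ μ : Fin N → ℝ, ∀ a b : Fin N, a < b → x a b = μ a + μ b := by
  have hN0 : 0 < N := by omega
  have hN1 : 1 < N := by omega
  have hN2 : 2 < N := by omega
  set i0 : Fin N := ⟨0, hN0⟩ with hi0
  set i1 : Fin N := ⟨1, hN1⟩ with hi1
  set i2 : Fin N := ⟨2, hN2⟩ with hi2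
  have h01 : i0 < i1 := by show (0:ℕ) < 1; norm_num
  have h02 : i0 < i2 := by show (0:ℕ) < 2; norm_num
  have h12 : i1 < i2 := by show (1:ℕ) < 2; norm_num
  -- Key: for any b > i1, x i0 b - x i1 b = x i0 i2 - x i1 i2
  have key : ∀ b : Fin N, i1 < b → x i0 b - x i1 b = x i0 i2 - x i1 i2 := by
    intro b hb
    by_cases hb2 : b = i2
    · rw [hb2]
    · have hbv : (1 : ℕ) < b.val := hb
      have hbv2 : b.val ≠ 2 := fun hh => hb2 (Fin.ext hh)
      have hcard : ({i0, i1, i2, b} : Finset (Fin N)).card = 4 := by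
        rw [Finset.card_insert_of_notMem (by simp [Fin.ext_iff]; omega),
          Finset.card_insert_of_notMem (by simp [Fin.ext_iff]; omega),
          Finset.card_insert_of_notMem (by simp [Fin.ext_iff]; omega),
          Finset.card_singleton]
      obtain ⟨ν, hν⟩ := h _ hcard
      have e1 := hν i0 (by simp) b (by simp) (lt_trans h01 hb)
      have e2 := hν i1 (by simp) b (by simp) hb
      have e3 := hν i0 (by simp) i2 (by simp) h02
      have e4 := hν i1 (by simp) i2 (by simp) h12
      linarith
  refine ⟨fun i => if i = i0 then (x i0 i1 + x i0 i2 - x i1 i2) / 2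
    else if i = i1 then (x i0 i1 - x i0 i2 + x i1 i2) / 2
    else (x i0 i + x i1 i - x i0 i1) / 2, ?_⟩
  intro a b hab
  have hbne0 : b ≠ i0 := by
    intro hh
    subst hh
    have hv : a.val < 0 := hab
    omega
  have h10 : i1 ≠ i0 := Fin.ne_of_gt h01
  by_cases ha0 : a = i0
  · subst ha0
    by_cases hb1 : b = i1
    · subst hb1
      simp only [eq_self_iff_true, if_true, if_neg h10]
      ring
    · have hbgt : i1 < b := by
        have hv : (0:ℕ) < b.val := hab
        have hb1' : b.val ≠ 1 := fun hh => hb1 (Fin.ext hh)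
        show (1:ℕ) < b.val
        omega
      have hk := key b hbgt
      simp only [eq_self_iff_true, if_true, if_neg hbne0, if_neg hb1]
      linarith
  · by_cases ha1 : a = i1
    · subst ha1
      have hb1 : b ≠ i1 := Fin.ne_of_gt hab
      have hk := key b hab
      simp only [eq_self_iff_true, if_true, if_neg hbne0, if_neg hb1, if_neg h10]
      linarith
    · -- a, b both ≥ 2 in some sense: a ∉ {i0, i1}
      have hav : (1:ℕ) < a.val := by
        have h0 : a.val ≠ 0 := fun hh => ha0 (Fin.ext hh)
        have h1 : a.val ≠ 1 := fun hh => ha1 (Fin.ext hh)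
        omega
      have hbv : (1:ℕ) < b.val := by
        have : a.val < b.val := hab
        omega
      have habne : a ≠ b := ne_of_lt hab
      have habv : a.val ≠ b.val := fun hh => habne (Fin.ext hh)
      have hb0 : b ≠ i0 := hbne0
      have hb1 : b ≠ i1 := by intro hh; rw [hh] at hbv; simp [i1] at hbv
      have hcard : ({i0, i1, a, b} : Finset (Fin N)).card = 4 := by
        rw [Finset.card_insert_of_notMem (by simp [Fin.ext_iff]; omega),
          Finset.card_insert_of_notMem (by simp [Fin.ext_iff]; omega),
          Finset.card_insert_of_notMem (by simp [Fin.ext_iff]; omega),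
          Finset.card_singleton]
      obtain ⟨ν, hν⟩ := h _ hcard
      have h0a : i0 < a := by show (0:ℕ) < a.val; omega
      have h1a : i1 < a := by show (1:ℕ) < a.val; omega
      have h0b : i0 < b := by show (0:ℕ) < b.val; omega
      have h1b : i1 < b := by show (1:ℕ) < b.val; omega
      have e1 := hν i0 (by simp) a (by simp) h0a
      have e2 := hν i1 (by simp) a (by simp) h1a
      have e3 := hν i0 (by simp) b (by simp) h0b
      have e4 := hν i1 (by simp) b (by simp) h1b
      have e5 := hν i0 (by simp) i1 (by simp) h01
      have e6 := hν a (by simp) b (by simp) hab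
      simp only [if_neg ha0, if_neg ha1, if_neg hb0, if_neg hb1]
      linarith
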